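/- Let H be a real Hilbert space, d ≥ 1 an integer, C ⊆ H a nonempty closed convex set with ‖x − y‖ ≤ d for all x, y ∈ C, T_1, …, T_N : C → C nonexpansive (N ≥ 1), and G : C → C a τ-contraction (0 ≤ τ < 1). Let (λ_n) ⊆ (0,1], χ : ℕ⁺ → ℕ with λ_n ≤ 1/k for all n ≥ χ(k), and φ₃ : (0,∞) × ℕ → ℕ with φ₃(δ, n) ≥ n and Π_{i=n}^{m}(1 − λ_i(1−τ)) ≤ δ for all m ≥ φ₃(δ, n). Let u₀ ∈ C, u_{n+1} := (1−λ_{n+1})·T_{[n+1]}(u_n) + λ_{n+1}·G(T_{[n+1]}(u_n)) where [m] is the unique index in {1,…,N} with [m] ≡ m (mod N), and let u* ∈ C. Let ε > 0, n₀ ∈ ℕ, g : ℕ → ℕ, and set ñ := g̃(φ₃(ε²/(3d²), n₀ + 1)) where g̃(n) := max{n, g(n)}. If (i) n₀ ≥ χ(⌈36d²/((1−τ)ε²)⌉), (ii) ⟨T_{[n+1]}(u_n) − u*, G(u*) − u*⟩ ≤ (1−τ)ε²/8 for all n with n₀ ≤ n ≤ ñ − 1, and (iii) ‖T_{[n+1]}(u*)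 − u*‖ ≤ ε²/(18d·max{ñ − n₀, 1}) for all n with n₀ ≤ n ≤ ñ − 1, then ‖u_{ñ} − u*‖ ≤ ε. -/

import Mathlib

open scoped RealInnerProductSpace

set_option maxHeartbeats 1000000

/-- `cyc N m` is the unique index in `{1, …, N}` congruent to `m` modulo `N`. -/
def cyc (N m : ℕ) : ℕ := if m % N = 0 then N else m % N

/-- `gTil g n = max {n, g n}`. -/
def gTil (g : ℕ → ℕ) (n : ℕ) : ℕ := max n (g n)

lemma cyc_mem {N : ℕ} (hN : 1 ≤ N) (m : ℕ) : cyc N m ∈ Finset.Icc 1 N := by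
  unfold cyc
  split_ifs with h
  · simp [hN]
  · have h1 : m % N < N := Nat.mod_lt _ hN
    have h2 : 1 ≤ m % N := Nat.one_le_iff_ne_zero.mpr h
    rw [Finset.mem_Icc]
    omega

lemma hsdm_step {H : Type*} [NormedAddCommGroup H] [InnerProductSpace ℝ H]
    (d ε τ l en : ℝ) (x xs y gy gxs : H)
    (hτ0 : 0 ≤ τ) (hτ1 : τ < 1) (hl0 : 0 < l) (hl1 : l ≤ 1)
    (hd1 : 1 ≤ d) (hε0 : 0 < ε)
    (hen0 : 0 ≤ en) (hend : en ≤ d)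
    (hyx : ‖y - xs‖ ≤ ‖x - xs‖ + en)
    (hxd : ‖x - xs‖ ≤ d)
    (hgc : ‖gy - gxs‖ ≤ τ * ‖y - xs‖)
    (hgyd : ‖gy - y‖ ≤ d) (hgxd : ‖gxs - xs‖ ≤ d)
    (hipb : ⟪y - xs, gxs - xs⟫ ≤ (1 - τ) * ε ^ 2 / 8)
    (hld : l * d ^ 2 ≤ (1 - τ) * ε ^ 2 / 36) :
    ‖((1 - l) • y + l • gy) - xs‖ ^ 2 ≤
      (1 - l * (1 - τ)) * ‖x - xs‖ ^ 2 + 3 * d * en + (l * (1 - τ)) * (ε ^ 2 / 3) := by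
  have hτ0' : (0:ℝ) < 1 - τ := by linarith
  set v : H := (1 - l) • (y - xs) + l • (gy - gxs) with hv
  set w : H := l • (gxs - xs) with hw
  set z : H := ((1 - l) • y + l • gy) - xs with hzdef
  have hz : z = v + w := by rw [hzdef, hv, hw]; module
  have h1 : ‖z‖ ^ 2 = ‖v‖ ^ 2 + 2 * ⟪z, w⟫ - ‖w‖ ^ 2 := by
    have h2 : ⟪v + w, w⟫ = ⟪v, w⟫ + ‖w‖ ^ 2 := by
      rw [inner_add_left, real_inner_self_eq_norm_sq]
    have h3 := norm_add_sq_real v w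
    rw [hz]; linarith
  set q : ℝ := 1 - l * (1 - τ) with hq
  have hq0 : 0 ≤ q := by nlinarith
  have hq1 : q ≤ 1 := by nlinarith
  -- bound on ‖v‖
  have hvb : ‖v‖ ≤ q * ‖y - xs‖ := by
    calc ‖v‖ ≤ ‖(1 - l) • (y - xs)‖ + ‖l • (gy - gxs)‖ := norm_add_le _ _
      _ = (1 - l) * ‖y - xs‖ + l * ‖gy - gxs‖ := by
          rw [norm_smul, norm_smul, Real.norm_of_nonneg (by linarith),
            Real.norm_of_nonneg hl0.le]
      _ ≤ (1 - l) * ‖y - xs‖ + l * (τ * ‖y - xs‖) := by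
          have := mul_le_mul_of_nonneg_left hgc hl0.le
          linarith
      _ = q * ‖y - xs‖ := by rw [hq]; ring
  have hry2 : ‖y - xs‖ ^ 2 ≤ ‖x - xs‖ ^ 2 + 3 * d * en := by
    nlinarith [norm_nonneg (y - xs), norm_nonneg (x - xs),
      mul_nonneg hen0 (norm_nonneg (x - xs))]
  have hv2 : ‖v‖ ^ 2 ≤ q * (‖x - xs‖ ^ 2 + 3 * d * en) := by
    have h3 : ‖v‖ ^ 2 ≤ (q * ‖y - xs‖) ^ 2 := pow_le_pow_left₀ (norm_nonneg v) hvb 2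
    have h4 : q ^ 2 * ‖y - xs‖ ^ 2 ≤ q * ‖y - xs‖ ^ 2 :=
      mul_le_mul_of_nonneg_right (pow_le_of_le_one hq0 hq1 two_ne_zero) (sq_nonneg _)
    have h5 : q * ‖y - xs‖ ^ 2 ≤ q * (‖x - xs‖ ^ 2 + 3 * d * en) :=
      mul_le_mul_of_nonneg_left hry2 hq0
    calc ‖v‖ ^ 2 ≤ (q * ‖y - xs‖) ^ 2 := h3
      _ = q ^ 2 * ‖y - xs‖ ^ 2 := by ring
      _ ≤ q * ‖y - xs‖ ^ 2 := h4
      _ ≤ q * (‖x - xs‖ ^ 2 + 3 * d * en) := h5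
  -- inner product bound
  have hz2 : z = (y - xs) + l • (gy - y) := by rw [hzdef]; module
  have h4 : ⟪gy - y, gxs - xs⟫ ≤ d * d :=
    le_trans (real_inner_le_norm _ _)
      (by nlinarith [norm_nonneg (gy - y), norm_nonneg (gxs - xs)])
  have hinner : ⟪z, gxs - xs⟫ ≤ (1 - τ) * ε ^ 2 / 8 + l * d ^ 2 := by
    rw [hz2, inner_add_left, real_inner_smul_left]
    have h5 := mul_le_mul_of_nonneg_left h4 hl0.le
    nlinarith
  have h2w : 2 * ⟪z, w⟫ ≤ (l * (1 - τ)) * (ε ^ 2 / 3) := by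
    rw [hw, real_inner_smul_right]
    have h6 := mul_le_mul_of_nonneg_left hinner hl0.le
    have h7 := mul_le_mul_of_nonneg_left hld hl0.le
    nlinarith [mul_pos (mul_pos hl0 hτ0') (pow_pos hε0 2)]
  have hw2 : 0 ≤ ‖w‖ ^ 2 := sq_nonneg _
  have h3den : 0 ≤ 3 * d * en := by positivity
  have hfin : q * (3 * d * en) ≤ 3 * d * en := by
    nlinarith [mul_nonneg (by linarith : (0:ℝ) ≤ 1 - q) h3den]
  have hexp : q * (‖x - xs‖ ^ 2 + 3 * d * en) = q * ‖x - xs‖ ^ 2 + q * (3 * d * en) := by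
    ring
  clear_value v w z q
  linarith [h1, hv2, h2w, hw2]

/-- Quantitative core lemma for the hybrid steepest descent method with a finite family:
smallness conditions up to `ñ := g̃(φ₃(ε²/(3d²), n₀ + 1))` force `‖u_ñ − u*‖ ≤ ε`. -/
theorem hsdm_family_core_lemma
    {H : Type*} [NormedAddCommGroup H] [InnerProductSpace ℝ H] [CompleteSpace H]
    (d : ℕ) (hd : 1 ≤ d)
    (C : Set H) (hne : C.Nonempty) (hcl : IsClosed C) (hcv : Convex ℝ C)
    (hbd : ∀ x ∈ C, ∀ y ∈ C, ‖x - y‖ ≤ (d : ℝ))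
    (N : ℕ) (hN : 1 ≤ N) (T : ℕ → H → H)
    (hTm : ∀ i ∈ Finset.Icc 1 N, Set.MapsTo (T i) C C)
    (hT : ∀ i ∈ Finset.Icc 1 N, ∀ x ∈ C, ∀ y ∈ C, ‖T i x - T i y‖ ≤ ‖x - y‖)
    (τ : ℝ) (hτ0 : 0 ≤ τ) (hτ1 : τ < 1)
    (G : H → H) (hGm : Set.MapsTo G C C)
    (hG : ∀ x ∈ C, ∀ y ∈ C, ‖G x - G y‖ ≤ τ * ‖x - y‖)
    (lam : ℕ → ℝ) (hlam : ∀ n, lam n ∈ Set.Ioc (0 : ℝ) 1)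
    (χ : ℕ → ℕ) (hχ : ∀ k : ℕ, 1 ≤ k → ∀ n ≥ χ k, lam n ≤ 1 / (k : ℝ))
    (φ₃ : ℝ → ℕ → ℕ)
    (hφ₃ge : ∀ δ : ℝ, 0 < δ → ∀ n : ℕ, n ≤ φ₃ δ n)
    (hφ₃ : ∀ δ : ℝ, 0 < δ → ∀ n : ℕ, ∀ m ≥ φ₃ δ n,
      ∏ i ∈ Finset.Icc n m, (1 - lam i * (1 - τ)) ≤ δ)
    (u : ℕ → H) (hu0 : u 0 ∈ C)
    (hrec : ∀ n, u (n + 1) = (1 - lam (n + 1)) • T (cyc N (n + 1)) (u n) +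
      lam (n + 1) • G (T (cyc N (n + 1)) (u n)))
    (ustar : H) (hustar : ustar ∈ C)
    (ε : ℝ) (hε : 0 < ε) (n₀ : ℕ) (g : ℕ → ℕ)
    (hn₀ : χ ⌈36 * (d : ℝ) ^ 2 / ((1 - τ) * ε ^ 2)⌉₊ ≤ n₀)
    (hip : ∀ n ∈ Finset.Ico n₀ (gTil g (φ₃ (ε ^ 2 / (3 * (d : ℝ) ^ 2)) (n₀ + 1))),
      ⟪T (cyc N (n + 1)) (u n) - ustar, G ustar - ustar⟫ ≤ (1 - τ) * ε ^ 2 / 8)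
    (hfixdef : ∀ n ∈ Finset.Ico n₀ (gTil g (φ₃ (ε ^ 2 / (3 * (d : ℝ) ^ 2)) (n₀ + 1))),
      ‖T (cyc N (n + 1)) ustar - ustar‖ ≤
        ε ^ 2 / (18 * (d : ℝ) *
          ((max (gTil g (φ₃ (ε ^ 2 / (3 * (d : ℝ) ^ 2)) (n₀ + 1)) - n₀) 1 : ℕ) : ℝ))) :
    ‖u (gTil g (φ₃ (ε ^ 2 / (3 * (d : ℝ) ^ 2)) (n₀ + 1))) - ustar‖ ≤ ε := by
  have hd1 : (1:ℝ) ≤ (d:ℝ) := by exact_mod_cast hd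
  have hdpos : (0:ℝ) < (d:ℝ) := by linarith
  have hτ0' : (0:ℝ) < 1 - τ := by linarith
  set δ : ℝ := ε ^ 2 / (3 * (d : ℝ) ^ 2) with hδdef
  have hδpos : 0 < δ := by rw [hδdef]; positivity
  set nt : ℕ := gTil g (φ₃ δ (n₀ + 1)) with hntdef
  have hntphi : φ₃ δ (n₀ + 1) ≤ nt := le_max_left _ _
  have hntge : n₀ + 1 ≤ nt := le_trans (hφ₃ge δ hδpos (n₀ + 1)) hntphi
  -- membership of the iterates
  have huC : ∀ n, u n ∈ C := by
    intro n
    induction n with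
    | zero => exact hu0
    | succ n ih =>
      rw [hrec n]
      have hmem := cyc_mem hN (n + 1)
      have hy : T (cyc N (n + 1)) (u n) ∈ C := hTm _ hmem ih
      have hGy : G (T (cyc N (n + 1)) (u n)) ∈ C := hGm hy
      have hl := hlam (n + 1)
      exact hcv hy hGy (by linarith [hl.2]) hl.1.le (by ring)
  -- trivial case ε ≥ d
  rcases le_or_gt (d : ℝ) ε with hεd | hεd
  · exact le_trans (hbd _ (huC _) _ hustar) hεd
  have hεd' : ε ≤ (d:ℝ) := hεd.le
  -- notation for the fixed-point defects
  set M : ℕ := nt - n₀ with hM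
  have hM1 : 1 ≤ M := by omega
  have hMpos : (0:ℝ) < (M:ℝ) := by exact_mod_cast hM1
  have hmax : max (nt - n₀) 1 = M := by omega
  rw [hmax] at hfixdef
  have he0 : ∀ n, 0 ≤ ‖T (cyc N (n + 1)) ustar - ustar‖ := fun n => norm_nonneg _
  have heb : ∀ n ∈ Finset.Ico n₀ nt,
      ‖T (cyc N (n + 1)) ustar - ustar‖ ≤ ε ^ 2 / (18 * (d:ℝ) * (M:ℝ)) := hfixdef
  have hebd : ∀ n ∈ Finset.Ico n₀ nt, ‖T (cyc N (n + 1)) ustar - ustar‖ ≤ (d:ℝ) := by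
    intro n hn
    refine le_trans (heb n hn) ?_
    rw [div_le_iff₀ (by positivity)]
    have hM1R : (1:ℝ) ≤ (M:ℝ) := by exact_mod_cast hM1
    nlinarith [mul_le_mul hεd' hεd' hε.le hdpos.le,
      mul_nonneg (mul_nonneg hdpos.le hdpos.le) (by linarith : (0:ℝ) ≤ (M:ℝ) - 1)]
  -- the smallness of lam beyond n₀
  have hkpos : 0 < ⌈36 * (d : ℝ) ^ 2 / ((1 - τ) * ε ^ 2)⌉₊ :=
    Nat.ceil_pos.mpr (by positivity)
  have hld : ∀ n, n₀ ≤ n → lam (n + 1) * (d:ℝ) ^ 2 ≤ (1 - τ) * ε ^ 2 / 36 := by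
    intro n hn
    set k := ⌈36 * (d : ℝ) ^ 2 / ((1 - τ) * ε ^ 2)⌉₊ with hk
    have hkR : (0:ℝ) < (k:ℝ) := by exact_mod_cast hkpos
    have hl1 : lam (n + 1) ≤ 1 / (k:ℝ) := hχ k hkpos (n + 1) (by omega)
    have hk2 : 36 * (d : ℝ) ^ 2 / ((1 - τ) * ε ^ 2) ≤ (k:ℝ) := Nat.le_ceil _
    rw [div_le_iff₀ (by positivity)] at hk2
    have h3 : lam (n + 1) * (36 * (d:ℝ) ^ 2) ≤ (1 / (k:ℝ)) * ((k:ℝ) * ((1 - τ) * ε ^ 2)) :=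
      mul_le_mul hl1 hk2 (by positivity) (by positivity)
    have h4 : (1 / (k:ℝ)) * ((k:ℝ) * ((1 - τ) * ε ^ 2)) = (1 - τ) * ε ^ 2 := by
      field_simp
    nlinarith [h3]
  -- one-step estimate
  have hstep : ∀ n ∈ Finset.Ico n₀ nt,
      ‖u (n + 1) - ustar‖ ^ 2 ≤
        (1 - lam (n + 1) * (1 - τ)) * ‖u n - ustar‖ ^ 2 +
          3 * (d:ℝ) * ‖T (cyc N (n + 1)) ustar - ustar‖ +
          (lam (n + 1) * (1 - τ)) * (ε ^ 2 / 3) := by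
    intro n hn
    have hn' := Finset.mem_Ico.mp hn
    have hmem := cyc_mem hN (n + 1)
    have hyC : T (cyc N (n + 1)) (u n) ∈ C := hTm _ hmem (huC n)
    have hGyC : G (T (cyc N (n + 1)) (u n)) ∈ C := hGm hyC
    have hGxsC : G ustar ∈ C := hGm hustar
    have hTxsC : T (cyc N (n + 1)) ustar ∈ C := hTm _ hmem hustar
    have hl := hlam (n + 1)
    have hyx : ‖T (cyc N (n + 1)) (u n) - ustar‖ ≤
        ‖u n - ustar‖ + ‖T (cyc N (n + 1)) ustar - ustar‖ := by
      have h1 : T (cyc N (n + 1)) (u n) - ustar =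
          (T (cyc N (n + 1)) (u n) - T (cyc N (n + 1)) ustar) +
            (T (cyc N (n + 1)) ustar - ustar) := by abel
      rw [h1]
      exact le_trans (norm_add_le _ _)
        (add_le_add (hT _ hmem _ (huC n) _ hustar) le_rfl)
    rw [hrec n]
    exact hsdm_step (d:ℝ) ε τ (lam (n + 1)) (‖T (cyc N (n + 1)) ustar - ustar‖)
      (u n) ustar (T (cyc N (n + 1)) (u n)) (G (T (cyc N (n + 1)) (u n))) (G ustar)
      hτ0 hτ1 hl.1 hl.2 hd1 hε (he0 n) (hebd n hn) hyx
      (hbd _ (huC n) _ hustar) (hG _ hyC _ hustar)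
      (hbd _ hGyC _ hyC) (hbd _ hGxsC _ hustar) (hip n hn) (hld n hn'.1)
  -- facts about the products
  have hq01 : ∀ i : ℕ, 0 ≤ 1 - lam i * (1 - τ) ∧ 1 - lam i * (1 - τ) ≤ 1 := by
    intro i
    have hl := hlam i
    constructor <;> nlinarith [hl.1, hl.2]
  -- main induction
  have key : ∀ j : ℕ, n₀ + j ≤ nt →
      ‖u (n₀ + j) - ustar‖ ^ 2 ≤
        (∏ i ∈ Finset.Icc (n₀ + 1) (n₀ + j), (1 - lam i * (1 - τ))) * (d:ℝ) ^ 2 +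
          (∑ n ∈ Finset.Ico n₀ (n₀ + j), 3 * (d:ℝ) * ‖T (cyc N (n + 1)) ustar - ustar‖) +
          (1 - ∏ i ∈ Finset.Icc (n₀ + 1) (n₀ + j), (1 - lam i * (1 - τ))) * (ε ^ 2 / 3) := by
    intro j
    induction j with
    | zero =>
      intro _
      have h1 : Finset.Icc (n₀ + 1) (n₀ + 0) = ∅ := Finset.Icc_eq_empty (by omega)
      have h2 : Finset.Ico n₀ (n₀ + 0) = ∅ := by simp
      rw [h1, h2]
      simp only [Finset.prod_empty, Finset.sum_empty]
      have h3 : ‖u n₀ - ustar‖ ≤ (d:ℝ) := hbd _ (huC n₀) _ hustar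
      have h4 : ‖u n₀ - ustar‖ ^ 2 ≤ (d:ℝ) ^ 2 :=
        pow_le_pow_left₀ (norm_nonneg _) h3 2
      simp only [sub_self, zero_mul, Nat.add_zero]
      linarith
    | succ j ih =>
      intro hj
      have hj' : n₀ + j ≤ nt := by omega
      have ihj := ih hj'
      have hmem : n₀ + j ∈ Finset.Ico n₀ nt := Finset.mem_Ico.mpr ⟨by omega, by omega⟩
      have hst := hstep (n₀ + j) hmem
      have hprod : ∏ i ∈ Finset.Icc (n₀ + 1) (n₀ + (j + 1)), (1 - lam i * (1 - τ)) =
          (∏ i ∈ Finset.Icc (n₀ + 1) (n₀ + j), (1 - lam i * (1 - τ))) *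
            (1 - lam (n₀ + j + 1) * (1 - τ)) := by
        rw [show n₀ + (j + 1) = (n₀ + j) + 1 by omega]
        exact Finset.prod_Icc_succ_top (by omega) _
      have hsum : ∑ n ∈ Finset.Ico n₀ (n₀ + (j + 1)),
            3 * (d:ℝ) * ‖T (cyc N (n + 1)) ustar - ustar‖ =
          (∑ n ∈ Finset.Ico n₀ (n₀ + j), 3 * (d:ℝ) * ‖T (cyc N (n + 1)) ustar - ustar‖) +
            3 * (d:ℝ) * ‖T (cyc N (n₀ + j + 1)) ustar - ustar‖ := by
        rw [show n₀ + (j + 1) = (n₀ + j) + 1 by omega]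
        exact Finset.sum_Ico_succ_top (by omega) _
      rw [hprod, hsum]
      set P : ℝ := ∏ i ∈ Finset.Icc (n₀ + 1) (n₀ + j), (1 - lam i * (1 - τ)) with hP
      set S : ℝ := ∑ n ∈ Finset.Ico n₀ (n₀ + j),
        3 * (d:ℝ) * ‖T (cyc N (n + 1)) ustar - ustar‖ with hS
      have hP0 : 0 ≤ P := Finset.prod_nonneg fun i _ => (hq01 i).1
      have hP1 : P ≤ 1 := Finset.prod_le_one (fun i _ => (hq01 i).1) (fun i _ => (hq01 i).2)
      have hS0 : 0 ≤ S := Finset.sum_nonneg fun n _ => by positivity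
      have hq := hq01 (n₀ + j + 1)
      set q : ℝ := 1 - lam (n₀ + j + 1) * (1 - τ) with hqd
      have hqrw : lam (n₀ + j + 1) * (1 - τ) = 1 - q := by rw [hqd]; ring
      rw [show n₀ + (j + 1) = (n₀ + j) + 1 by omega] at *
      have hcomb := mul_le_mul_of_nonneg_left ihj hq.1
      clear_value P S q
      nlinarith [mul_nonneg (by linarith [hq.1, hq.2] : (0:ℝ) ≤ 1 - q) hS0,
        mul_nonneg hq.1 hS0, sq_nonneg ε]
  -- specialize to m = nt
  have hfin := key M (by omega)
  rw [show n₀ + M = nt by omega] at hfin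
  set P : ℝ := ∏ i ∈ Finset.Icc (n₀ + 1) nt, (1 - lam i * (1 - τ)) with hPdef
  have hP0 : 0 ≤ P := Finset.prod_nonneg fun i _ => (hq01 i).1
  have hPδ : P ≤ δ := hφ₃ δ hδpos (n₀ + 1) nt hntphi
  have hPd : P * (d:ℝ) ^ 2 ≤ ε ^ 2 / 3 := by
    have h1 : δ * (d:ℝ) ^ 2 = ε ^ 2 / 3 := by
      rw [hδdef]; field_simp
    nlinarith [mul_le_mul_of_nonneg_right hPδ (sq_nonneg (d:ℝ))]
  have hSb : (∑ n ∈ Finset.Ico n₀ nt, 3 * (d:ℝ) * ‖T (cyc N (n + 1)) ustar - ustar‖) ≤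
      ε ^ 2 / 6 := by
    have hcard : (Finset.Ico n₀ nt).card = M := by rw [Nat.card_Ico]
    have h1 : ∀ n ∈ Finset.Ico n₀ nt,
        3 * (d:ℝ) * ‖T (cyc N (n + 1)) ustar - ustar‖ ≤
          3 * (d:ℝ) * (ε ^ 2 / (18 * (d:ℝ) * (M:ℝ))) := fun n hn =>
      mul_le_mul_of_nonneg_left (heb n hn) (by positivity)
    have h2 := Finset.sum_le_card_nsmul _ _ _ h1
    rw [hcard] at h2
    have h3 : (M:ℝ) * (3 * (d:ℝ) * (ε ^ 2 / (18 * (d:ℝ) * (M:ℝ)))) = ε ^ 2 / 6 := by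
      field_simp
      ring
    rw [nsmul_eq_mul] at h2
    linarith
  have h1P : (1 - P) * (ε ^ 2 / 3) ≤ ε ^ 2 / 3 := by nlinarith [sq_nonneg ε]
  have hfinal : ‖u nt - ustar‖ ^ 2 ≤ ε ^ 2 * (5 / 6) := by
    have := hfin
    nlinarith
  nlinarith [norm_nonneg (u nt - ustar), hε, hfinal]
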